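/- Let {d_1,...,d_{n-k}} ⊆ F_q^n be linearly independent with ρ̄_W(d_1) < ... < ρ̄_W(d_{n-k}), with values l_1 < ... < l_{n-k}, and let C = {c ∈ F_q^n : c · d_1 = ... = c · d_{n-k} = 0}. Then m(C) = {1,...,n} \ {l_1,...,l_{n-k}}. -/

import Mathlib

variable {F : Type*} [Field F] [Fintype F] {n : ℕ}

/-- The span of the first `i` basis vectors `w_1, ..., w_i` (1-based). -/
def spanPrefix (w : Module.Basis (Fin n) F (Fin n → F)) (i : ℕ) : Submodule F (Fin n → F) :=
  Submodule.span F (⇑w '' {k : Fin n | (k : ℕ) < i})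

/-- The standard dot product on `F^n`. -/
def dotP (u v : Fin n → F) : F := ∑ i, u i * v i

/-- `ρ` is the function `ρ̄_W`: `ρ 0 = 0` and for nonzero `c`, `ρ c = l`
(1-based, written as `k+1` for `k : Fin n`) iff
`c ∈ Span{w_1,...,w_l} \ Span{w_1,...,w_{l-1}}`. -/
def IsRho (w : Module.Basis (Fin n) F (Fin n → F)) (ρ : (Fin n → F) → ℕ) : Prop :=
  ρ 0 = 0 ∧ ∀ c : Fin n → F, c ≠ 0 → ∃ k : Fin n,
    ρ c = (k : ℕ) + 1 ∧ c ∈ spanPrefix w ((k : ℕ) + 1) ∧ c ∉ spanPrefix w (k : ℕ)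

/-- `m` is the function `m(c) = min{l : c · w_l ≠ 0}` (1-based). -/
def IsM (w : Module.Basis (Fin n) F (Fin n → F)) (m : (Fin n → F) → ℕ) : Prop :=
  ∀ c : Fin n → F, c ≠ 0 → ∃ k : Fin n,
    m c = (k : ℕ) + 1 ∧ dotP c (w k) ≠ 0 ∧ ∀ k' : Fin n, k' < k → dotP c (w k') = 0

/-- Hamming weight. -/
noncomputable def wH (c : Fin n → F) : ℕ := Set.ncard {i : Fin n | c i ≠ 0}

/-- Support of a subspace. -/
def suppD (D : Submodule F (Fin n → F)) : Set (Fin n) := {i : Fin n | ∃ c ∈ D, c i ≠ 0}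

set_option linter.unusedSectionVars false

lemma dotP_comm (u v : Fin n → F) : dotP u v = dotP v u := by
  simp [dotP, mul_comm]

lemma dotP_repr (w : Module.Basis (Fin n) F (Fin n → F)) (c v : Fin n → F) :
    dotP c v = ∑ j, w.repr v j * dotP c (w j) := by
  conv_lhs => rw [← w.sum_repr v]
  simp only [dotP, Finset.sum_apply, Pi.smul_apply, smul_eq_mul, Finset.mul_sum]
  rw [Finset.sum_comm]
  apply Finset.sum_congr rfl
  intro j _
  apply Finset.sum_congr rfl
  intro i _
  ring

lemma mem_spanPrefix (w : Module.Basis (Fin n) F (Fin n → F)) (i : ℕ) (c : Fin n → F) :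
    c ∈ spanPrefix w i ↔ ∀ j : Fin n, i ≤ (j : ℕ) → w.repr c j = 0 := by
  rw [spanPrefix, Module.Basis.mem_span_image]
  constructor
  · intro h j hj
    by_contra hne
    have : j ∈ ({k : Fin n | (k : ℕ) < i} : Set (Fin n)) := h (Finsupp.mem_support_iff.mpr hne)
    simp only [Set.mem_setOf_eq] at this
    omega
  · intro h j hj
    simp only [Finset.mem_coe, Finsupp.mem_support_iff] at hj
    simp only [Set.mem_setOf_eq]
    by_contra hc
    exact hj (h j (by omega))

lemma dotP_add_single (x : Fin n → F) (t : F) (p : Fin n) (v : Fin n → F) :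
    dotP (x + t • (Pi.single p 1 : Fin n → F)) v = dotP x v + t * v p := by
  simp only [dotP, Pi.add_apply, Pi.smul_apply, smul_eq_mul, add_mul, Finset.sum_add_distrib]
  congr 1
  rw [Finset.sum_eq_single p]
  · simp
  · intro b _ hb; simp [Pi.single_apply, hb]
  · simp [Fintype.complete]

lemma exists_solution : ∀ (r : ℕ) (e : Fin r → Fin n → F) (k : Fin r → Fin n),
    StrictMono k → (∀ a, e a (k a) ≠ 0) → (∀ a (j : Fin n), k a < j → e a j = 0) →
    ∀ l : Fin n, (∀ a, k a ≠ l) →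
    ∃ x : Fin n → F, (∀ a, dotP x (e a) = 0) ∧ x l ≠ 0 ∧ ∀ j : Fin n, j < l → x j = 0 := by
  intro r
  induction r with
  | zero =>
    intro e k _ _ _ l _
    refine ⟨Pi.single l 1, fun a => a.elim0, by simp, fun j hj => ?_⟩
    simp [Pi.single_apply, (Fin.ne_of_lt hj)]
  | succ r ih =>
    intro e k hk hke hke2 l hl
    obtain ⟨x, hx1, hx2, hx3⟩ := ih (fun a => e a.castSucc) (fun a => k a.castSucc)
      (fun a b hab => hk (by exact Fin.castSucc_lt_castSucc_iff.mpr hab))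
      (fun a => hke _) (fun a j hj => hke2 _ j hj) l (fun a => hl _)
    set a0 : Fin (r + 1) := Fin.last r with ha0
    rcases lt_or_gt_of_ne (hl a0) with hcase | hcase
    · -- k a0 < l : x already works
      refine ⟨x, ?_, hx2, hx3⟩
      intro a
      refine Fin.lastCases ?_ ?_ a
      · -- a = last
        rw [dotP]
        apply Finset.sum_eq_zero
        intro j _
        rcases le_or_gt j (k a0) with hj | hj
        · rw [hx3 j (lt_of_le_of_lt hj hcase), zero_mul]
        · rw [hke2 a0 j hj, mul_zero]
      · intro b; exact hx1 b
    · -- l < k a0 : adjust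
      have hlast : ∀ b : Fin r, k b.castSucc < k a0 :=
        fun b => hk (Fin.castSucc_lt_last b)
      set t : F := -(dotP x (e a0)) / e a0 (k a0) with ht
      refine ⟨x + t • (Pi.single (k a0) 1 : Fin n → F), ?_, ?_, ?_⟩
      · intro a
        refine Fin.lastCases ?_ ?_ a
        · rw [dotP_add_single]
          show dotP x (e a0) + t * e a0 (k a0) = 0
          rw [ht, div_mul_cancel₀ _ (hke a0)]
          ring
        · intro b
          rw [dotP_add_single, hx1 b, hke2 b.castSucc (k a0) (hlast b), mul_zero, add_zero]
      · have h1 : (Pi.single (k a0) (1:F) : Fin n → F) l = 0 := by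
          simp [Pi.single_apply, (hl a0).symm]
        simp only [Pi.add_apply, Pi.smul_apply, h1, smul_eq_mul, mul_zero, add_zero]
        exact hx2
      · intro j hj
        have hjne : (Pi.single (k a0) (1:F) : Fin n → F) j = 0 := by
          have hne : j ≠ k a0 := Fin.ne_of_lt (lt_trans hj hcase)
          simp [Pi.single_apply, hne]
        simp only [Pi.add_apply, Pi.smul_apply, hjne, smul_eq_mul, mul_zero, add_zero]
        exact hx3 j hj

lemma exists_dotP_eq (w : Module.Basis (Fin n) F (Fin n → F)) (x : Fin n → F) :
    ∃ c : Fin n → F, ∀ j, dotP c (w j) = x j := by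
  let φ : (Fin n → F) →ₗ[F] (Fin n → F) :=
    { toFun := fun c j => dotP c (w j)
      map_add' := fun c c' => by
        funext j
        simp [dotP, add_mul, Finset.sum_add_distrib]
      map_smul' := fun t c => by
        funext j
        simp [dotP, Finset.mul_sum, mul_assoc] }
  have hinj : Function.Injective φ := by
    rw [← LinearMap.ker_eq_bot, LinearMap.ker_eq_bot']
    intro c hc
    have h0 : ∀ j, dotP c (w j) = 0 := fun j => congrFun hc j
    funext i
    have : dotP c (Pi.single i 1) = c i := by
      rw [dotP, Finset.sum_eq_single i]
      · simp
      · intro b _ hb; simp [Pi.single_apply, hb]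
      · simp [Fintype.complete]
    rw [Pi.zero_apply, ← this, dotP_repr w c (Pi.single i 1)]
    apply Finset.sum_eq_zero
    intro j _
    rw [h0 j, mul_zero]
  obtain ⟨c, hc⟩ := (LinearMap.injective_iff_surjective).mp hinj x
  exact ⟨c, fun j => congrFun hc j⟩


/-- if `d_1,...,d_{n-k}` are linearly independent with
`ρ̄_W(d_1) < ⋯ < ρ̄_W(d_{n-k})` and `C = {c : c · d_a = 0 for all a}`, then
`m(C) = {1,...,n} \ {ρ̄_W(d_1),...,ρ̄_W(d_{n-k})}`. -/
theorem stmt_11 (w : Module.Basis (Fin n) F (Fin n → F))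
    (ρ m : (Fin n → F) → ℕ) (hρ : IsRho w ρ) (hm : IsM w m)
    (r : ℕ) (d : Fin r → (Fin n → F)) (hd : LinearIndependent F d)
    (hmono : StrictMono fun a : Fin r => ρ (d a)) :
    {l : ℕ | ∃ c : Fin n → F, (∀ a : Fin r, dotP c (d a) = 0) ∧ c ≠ 0 ∧ m c = l}
      = {l : ℕ | 1 ≤ l ∧ l ≤ n} \ {l : ℕ | ∃ a : Fin r, ρ (d a) = l} := by
  obtain ⟨hρ0, hρ2⟩ := hρ
  choose k hk1 hk2 hk3 using fun a : Fin r => hρ2 (d a) (hd.ne_zero a)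
  set e : Fin r → Fin n → F := fun a j => w.repr (d a) j with he
  have he_zero : ∀ (a : Fin r) (j : Fin n), k a < j → e a j = 0 := by
    intro a j hj
    exact (mem_spanPrefix w _ _).mp (hk2 a) j (by exact_mod_cast Nat.succ_le_of_lt hj)
  have he_top : ∀ a : Fin r, e a (k a) ≠ 0 := by
    intro a ha
    apply hk3 a
    rw [mem_spanPrefix]
    intro j hj
    rcases eq_or_lt_of_le hj with hj' | hj'
    · have : j = k a := by
        apply Fin.ext; omega
      rw [this]; exact ha
    · exact he_zero a j (by exact_mod_cast hj')
  have hkmono : StrictMono k := by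
    intro a b hab
    have h : ρ (d a) < ρ (d b) := hmono hab
    rw [hk1 a, hk1 b] at h
    exact Fin.lt_def.mpr (by omega)
  ext l
  simp only [Set.mem_setOf_eq, Set.mem_diff, Set.mem_setOf_eq]
  constructor
  · rintro ⟨c, hc, hcne, hmc⟩
    obtain ⟨kc, hmc1, hmc2, hmc3⟩ := hm c hcne
    rw [hmc] at hmc1
    refine ⟨⟨by omega, by have := kc.isLt; omega⟩, ?_⟩
    rintro ⟨a, ha⟩
    have hka : k a = kc := by
      rw [hk1 a] at ha
      apply Fin.ext; omega
    have hz := dotP_repr w c (d a)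
    rw [hc a, Finset.sum_eq_single kc] at hz
    · exact (mul_ne_zero (hka ▸ he_top a) hmc2) hz.symm
    · intro j _ hj
      rcases lt_or_gt_of_ne hj with h | h
      · rw [hmc3 j h, mul_zero]
      · rw [show w.repr (d a) j = e a j from rfl, he_zero a j (hka ▸ h), zero_mul]
    · simp [Fintype.complete]
  · rintro ⟨⟨hl1, hl2⟩, hnr⟩
    set l' : Fin n := ⟨l - 1, by omega⟩ with hl'
    have hkl : ∀ a, k a ≠ l' := by
      intro a h
      exact hnr ⟨a, by rw [hk1 a, h]; simp [hl']; omega⟩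
    obtain ⟨x, hx1, hx2, hx3⟩ := exists_solution r e k hkmono he_top he_zero l' hkl
    obtain ⟨c, hc⟩ := exists_dotP_eq w x
    have hcne : c ≠ 0 := by
      intro h
      apply hx2
      rw [← hc l', h]
      simp [dotP]
    refine ⟨c, ?_, hcne, ?_⟩
    · intro a
      rw [dotP_repr w c (d a)]
      have : ∀ j, w.repr (d a) j * dotP c (w j) = x j * e a j := by
        intro j; rw [hc j]; ring
      rw [Finset.sum_congr rfl fun j _ => this j]
      exact hx1 a
    · obtain ⟨kc, hmc1, hmc2, hmc3⟩ := hm c hcne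
      rw [hc] at hmc2
      have hmc3' : ∀ k' : Fin n, k' < kc → x k' = 0 := fun k' h => by
        rw [← hc]; exact hmc3 k' h
      have hkcl : kc = l' := by
        by_contra hne
        rcases lt_or_gt_of_ne hne with h | h
        · exact hmc2 (hx3 kc h)
        · exact hx2 (hmc3' l' h)
      rw [hmc1, hkcl]
      simp [hl']; omega
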